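/- Let n ≥ 3, let e be an integer with e ∉ {−1, 0, 1}, and let r ≥ 2 be a divisor of n such that r divides e^(n/r) − 1 (as integers). Let α ∈ Sₙ be a cyclic permutation of length n (α is a cycle whose support has n elements). Then the power conjugate equation (e*α) has a non-trivial solution y ≠ 1 such that y^r = 1 and every point lies on a y-cycle of length exactly r (i.e. for every x, (y.cycleOf x).support.card = r). -/

import Mathlib

namespace Stmt9Aux

/-! ### ZMod-side construction -/

/-- The embedding `ZMod r → ZMod n` (as a function), `a ↦ m * a.val`, where `n = m * r`. -/
def psiMap (n r m : ℕ) (a : ZMod r) : ZMod n := ((m * a.val : ℕ) : ZMod n)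

lemma psiMap_zero (n r m : ℕ) [NeZero r] : psiMap n r m 0 = 0 := by
  simp [psiMap, ZMod.val_zero]

lemma psiMap_mod (n r m : ℕ) (hmr : m * r = n) (s : ℕ) :
    ((m * (s % r) : ℕ) : ZMod n) = ((m * s : ℕ) : ZMod n) := by
  conv_rhs => rw [← Nat.mod_add_div s r]
  have h0 : ((m : ZMod n) * (r : ZMod n)) = 0 := by
    have h : ((m * r : ℕ) : ZMod n) = 0 := by rw [hmr]; exact ZMod.natCast_self n
    push_cast at h
    exact h
  push_cast
  rw [mul_add, ← mul_assoc, h0, zero_mul, add_zero]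

lemma psiMap_add (n r m : ℕ) [NeZero r] (hmr : m * r = n) (a b : ZMod r) :
    psiMap n r m (a + b) = psiMap n r m a + psiMap n r m b := by
  unfold psiMap
  rw [ZMod.val_add, psiMap_mod n r m hmr]
  push_cast
  ring

lemma psiMap_neg (n r m : ℕ) [NeZero r] (hmr : m * r = n) (a : ZMod r) :
    psiMap n r m (-a) = - psiMap n r m a := by
  have h := psiMap_add n r m hmr a (-a)
  rw [add_neg_cancel, psiMap_zero] at h
  exact (neg_eq_of_add_eq_zero_right h.symm).symm

lemma psiMap_eq_zero (n r m : ℕ) [NeZero n] [NeZero r] (hmr : m * r = n) (hm1 : 1 ≤ m)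
    {a : ZMod r} (h : psiMap n r m a = 0) : a = 0 := by
  have h1 : a.val < r := ZMod.val_lt a
  have hlt : m * a.val < n := by
    have := Nat.mul_lt_mul_of_lt_of_le h1 (le_refl m) (by omega)
    -- fallback
    calc m * a.val < m * r := by
          exact Nat.mul_lt_mul_of_pos_left h1 (by omega)
      _ = n := hmr
  have hdvd := (ZMod.natCast_eq_zero_iff (m * a.val) n).1 h
  have h0 : m * a.val = 0 := Nat.eq_zero_of_dvd_of_lt hdvd hlt
  have : a.val = 0 := by
    rcases Nat.mul_eq_zero.1 h0 with h | h
    · omega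
    · exact h
  exact (ZMod.val_eq_zero a).1 this

/-- `u x = δ ^ x.val`. -/
def uMap (n r : ℕ) (δ : (ZMod r)ˣ) (x : ZMod n) : (ZMod r)ˣ := δ ^ x.val

lemma pow_congr {r : ℕ} (δ : (ZMod r)ˣ) {m : ℕ} (hδ : δ ^ m = 1) {a b : ℕ}
    (h : a ≡ b [MOD m]) : δ ^ a = δ ^ b := by
  have hord : orderOf δ ∣ m := orderOf_dvd_of_pow_eq_one hδ
  exact pow_eq_pow_iff_modEq.mpr (h.of_dvd hord)

lemma uMap_stab (n r m : ℕ) [NeZero n] [NeZero r] (δ : (ZMod r)ˣ) (hmr : m * r = n)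
    (hδ : δ ^ m = 1) (x : ZMod n) (a : ZMod r) :
    uMap n r δ (x + psiMap n r m a) = uMap n r δ x := by
  have hmn : m ∣ n := ⟨r, hmr.symm⟩
  show δ ^ (x + psiMap n r m a).val = δ ^ x.val
  apply pow_congr δ hδ
  have h1 : (x + psiMap n r m a).val = (x.val + (m * a.val) % n) % n := by
    show (x + ((m * a.val : ℕ) : ZMod n)).val = _
    rw [ZMod.val_add, ZMod.val_natCast]
  rw [h1]
  have e1 : (x.val + (m * a.val) % n) % n ≡ x.val + (m * a.val) % n [MOD m] :=
    (Nat.mod_modEq _ n).of_dvd hmn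
  have e2 : (m * a.val) % n ≡ 0 [MOD m] :=
    ((Nat.mod_modEq _ n).of_dvd hmn).trans (Nat.modEq_zero_iff_dvd.2 (dvd_mul_right m a.val))
  exact e1.trans (by simpa using Nat.ModEq.add_left x.val e2)

/-- `W x = psiMap (u x)`. -/
def wMap (n r m : ℕ) (δ : (ZMod r)ˣ) (x : ZMod n) : ZMod n :=
  psiMap n r m ((uMap n r δ x : ZMod r))

lemma wMap_stab (n r m : ℕ) [NeZero n] [NeZero r] (δ : (ZMod r)ˣ) (hmr : m * r = n)
    (hδ : δ ^ m = 1) (x : ZMod n) (a : ZMod r) :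
    wMap n r m δ (x + psiMap n r m a) = wMap n r m δ x := by
  unfold wMap
  rw [uMap_stab n r m δ hmr hδ]

/-- The permutation `x ↦ x + W x`. -/
def yPerm (n r m : ℕ) [NeZero n] [NeZero r] (δ : (ZMod r)ˣ) (hmr : m * r = n)
    (hδ : δ ^ m = 1) : Equiv.Perm (ZMod n) where
  toFun x := x + wMap n r m δ x
  invFun x := x - wMap n r m δ x
  left_inv x := by
    have h : wMap n r m δ (x + wMap n r m δ x) = wMap n r m δ x :=
      wMap_stab n r m δ hmr hδ x _
    show x + wMap n r m δ x - wMap n r m δ (x + wMap n r m δ x) = x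
    rw [h]
    ring
  right_inv x := by
    have hx : x - wMap n r m δ x = x + psiMap n r m (-(uMap n r δ x : ZMod r)) := by
      rw [psiMap_neg n r m hmr]
      show x - wMap n r m δ x = x + - wMap n r m δ x
      ring
    show x - wMap n r m δ x + wMap n r m δ (x - wMap n r m δ x) = x
    rw [hx, wMap_stab n r m δ hmr hδ]
    show x + psiMap n r m (-(uMap n r δ x : ZMod r)) + wMap n r m δ x = x
    have h0 : psiMap n r m (-(uMap n r δ x : ZMod r)) + wMap n r m δ x = 0 := by
      unfold wMap
      rw [← psiMap_add n r m hmr, neg_add_cancel, psiMap_zero]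
    rw [add_assoc, h0, add_zero]

lemma yPerm_apply (n r m : ℕ) [NeZero n] [NeZero r] (δ : (ZMod r)ˣ) (hmr : m * r = n)
    (hδ : δ ^ m = 1) (x : ZMod n) :
    yPerm n r m δ hmr hδ x = x + psiMap n r m ((uMap n r δ x : ZMod r)) := rfl

lemma yPerm_pow (n r m : ℕ) [NeZero n] [NeZero r] (δ : (ZMod r)ˣ) (hmr : m * r = n)
    (hδ : δ ^ m = 1) (k : ℕ) (x : ZMod n) :
    (yPerm n r m δ hmr hδ ^ k) x
      = x + psiMap n r m ((k : ZMod r) * (uMap n r δ x : ZMod r)) := by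
  induction k generalizing x with
  | zero => simp [psiMap_zero]
  | succ k ih =>
    rw [pow_succ', Equiv.Perm.mul_apply, yPerm_apply, ih, uMap_stab n r m δ hmr hδ]
    have hcast : ((k + 1 : ℕ) : ZMod r) * (uMap n r δ x : ZMod r)
        = (k : ZMod r) * (uMap n r δ x : ZMod r) + (uMap n r δ x : ZMod r) := by
      push_cast
      ring
    rw [hcast, psiMap_add n r m hmr]
    ring

lemma yPerm_fix (n r m : ℕ) [NeZero n] [NeZero r] (δ : (ZMod r)ˣ) (hmr : m * r = n)
    (hδ : δ ^ m = 1) (hm1 : 1 ≤ m) (z : ZMod n) (k : ℕ) :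
    (yPerm n r m δ hmr hδ ^ k) z = z ↔ r ∣ k := by
  rw [yPerm_pow, add_eq_left]
  constructor
  · intro h
    have h1 : (k : ZMod r) * (uMap n r δ z : ZMod r) = 0 :=
      psiMap_eq_zero n r m hmr hm1 h
    have h2 : (k : ZMod r) = 0 := (Units.mul_left_eq_zero _).1 h1
    exact (ZMod.natCast_eq_zero_iff k r).1 h2
  · intro h
    have h2 : (k : ZMod r) = 0 := (ZMod.natCast_eq_zero_iff k r).2 h
    rw [h2, zero_mul, psiMap_zero]


lemma zpow_reduce {G : Type*} [Group G] (g : G) (r : ℕ) (hr : 0 < r) (h : g ^ r = 1)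
    (e : ℤ) : g ^ e = g ^ ((e % (r : ℤ)).toNat) := by
  have hs : ((e % (r : ℤ)).toNat : ℤ) = e % (r : ℤ) :=
    Int.toNat_of_nonneg (Int.emod_nonneg e (by exact_mod_cast hr.ne'))
  have he : e = (r : ℤ) * (e / (r : ℤ)) + e % (r : ℤ) := (Int.mul_ediv_add_emod e (r : ℤ)).symm
  calc g ^ e = g ^ ((r : ℤ) * (e / (r : ℤ)) + e % (r : ℤ)) := by rw [← he]
    _ = (g ^ (r : ℤ)) ^ (e / (r : ℤ)) * g ^ (e % (r : ℤ)) := by rw [zpow_add, zpow_mul]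
    _ = g ^ (e % (r : ℤ)) := by rw [zpow_natCast, h, one_zpow, one_mul]
    _ = g ^ ((e % (r : ℤ)).toNat) := by conv_lhs => rw [← hs, zpow_natCast]

lemma toNat_emod_cast (r : ℕ) [NeZero r] (e : ℤ) :
    (((e % (r : ℤ)).toNat : ℕ) : ZMod r) = (e : ZMod r) := by
  have hs : ((e % (r : ℤ)).toNat : ℤ) = e % (r : ℤ) :=
    Int.toNat_of_nonneg (Int.emod_nonneg e (by exact_mod_cast (NeZero.pos r).ne'))
  have : ((((e % (r : ℤ)).toNat : ℤ)) : ZMod r) = ((e % (r : ℤ) : ℤ) : ZMod r) := by rw [hs]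
  rw [ZMod.intCast_mod] at this
  exact_mod_cast this

/-- The key conjugation identity for `yPerm`. -/
lemma yPerm_conj (n r m : ℕ) [NeZero n] [NeZero r] (hn : 1 < n) (hr : 1 < r)
    (δ : (ZMod r)ˣ) (hmr : m * r = n) (hδ : δ ^ m = 1) (hm1 : 1 ≤ m)
    (e : ℤ) (hδe : ((δ⁻¹ : (ZMod r)ˣ) : ZMod r) = (e : ZMod r)) :
    Equiv.addRight (1 : ZMod n) * yPerm n r m δ hmr hδ
      = yPerm n r m δ hmr hδ ^ e * Equiv.addRight (1 : ZMod n) := by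
  haveI : Fact (1 < n) := ⟨hn⟩
  set Y := yPerm n r m δ hmr hδ with hY
  have hYr : Y ^ r = 1 := by
    ext z
    simpa using (yPerm_fix n r m δ hmr hδ hm1 z r).2 dvd_rfl
  have hze : Y ^ e = Y ^ ((e % (r : ℤ)).toNat) := zpow_reduce Y r (by omega) hYr e
  set s := (e % (r : ℤ)).toNat with hsdef
  have hsE : ((s : ℕ) : ZMod r) = (e : ZMod r) := toNat_emod_cast r e
  ext x
  rw [Equiv.Perm.mul_apply, Equiv.Perm.mul_apply, hze]
  have hcx : Equiv.addRight (1 : ZMod n) x = x + 1 := rfl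
  rw [hcx, yPerm_pow, yPerm_apply]
  -- goal : (x + psiMap (u x)) + 1 = (x+1) + psiMap (s * u (x+1))
  have hmn : m ∣ n := ⟨r, hmr.symm⟩
  have hval : x.val + 1 ≡ (x + 1).val [MOD m] := by
    have h1 : (x + 1).val = (x.val + 1) % n := by
      rw [ZMod.val_add, ZMod.val_one]
    rw [h1]
    exact ((Nat.mod_modEq _ n).of_dvd hmn).symm
  have hunit : uMap n r δ x = δ⁻¹ * uMap n r δ (x + 1) := by
    have h2 : δ ^ (x.val + 1) = δ ^ ((x + 1).val) := pow_congr δ hδ hval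
    show δ ^ x.val = δ⁻¹ * δ ^ ((x + 1).val)
    rw [← h2, pow_succ]
    group
  have hkey : ((s : ℕ) : ZMod r) * (uMap n r δ (x + 1) : ZMod r)
      = (uMap n r δ x : ZMod r) := by
    rw [hsE, ← hδe, hunit]
    push_cast
    ring
  rw [hkey]
  have hcx' : Equiv.addRight (1 : ZMod n) (x + psiMap n r m ((uMap n r δ x : ZMod r)))
      = x + psiMap n r m ((uMap n r δ x : ZMod r)) + 1 := rfl
  rw [hcx']
  ring

/-- `Equiv.addRight 1` on `ZMod n` is an `n`-cycle. -/
lemma addRight_pow (n : ℕ) (k : ℕ) (x : ZMod n) :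
    ((Equiv.addRight (1 : ZMod n)) ^ k) x = x + (k : ZMod n) := by
  induction k generalizing x with
  | zero => simp
  | succ k ih =>
    rw [pow_succ, Equiv.Perm.mul_apply]
    have : Equiv.addRight (1 : ZMod n) x = x + 1 := rfl
    rw [this, ih]
    push_cast
    ring

lemma addRight_isCycle (n : ℕ) [NeZero n] (hn : 1 < n) :
    (Equiv.addRight (1 : ZMod n)).IsCycle := by
  haveI : Fact (1 < n) := ⟨hn⟩
  refine ⟨0, ?_, ?_⟩
  · show (0 : ZMod n) + 1 ≠ 0
    simpa using one_ne_zero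
  · intro y _
    refine ⟨(y.val : ℤ), ?_⟩
    rw [zpow_natCast, addRight_pow]
    simpa using ZMod.natCast_zmod_val y

lemma addRight_support (n : ℕ) [NeZero n] (hn : 1 < n) :
    (Equiv.addRight (1 : ZMod n)).support.card = n := by
  haveI : Fact (1 < n) := ⟨hn⟩
  have : (Equiv.addRight (1 : ZMod n)).support = Finset.univ := by
    ext z
    simp only [Equiv.Perm.mem_support, Finset.mem_univ, iff_true]
    show z + 1 ≠ z
    simp
  rw [this, Finset.card_univ, ZMod.card]


/-- permCongr as a MulEquiv. -/
def permCongrMul {γ δ : Type*} (h : γ ≃ δ) : Equiv.Perm γ ≃* Equiv.Perm δ :=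
  { h.permCongr with
    map_mul' := fun p q => by
      ext x
      simp [Equiv.permCongr_apply, Equiv.Perm.mul_apply] }

lemma permCongrMul_apply {γ δ : Type*} (h : γ ≃ δ) (p : Equiv.Perm γ) (x : γ) :
    permCongrMul h p (h x) = h (p x) := by
  simp [permCongrMul, Equiv.permCongr_apply]

lemma isCycle_permCongrMul {γ δ : Type*} (h : γ ≃ δ) {p : Equiv.Perm γ}
    (hp : p.IsCycle) : (permCongrMul h p).IsCycle := by
  obtain ⟨x, hx, hsc⟩ := hp
  refine ⟨h x, ?_, ?_⟩
  · rw [permCongrMul_apply]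
    simpa using hx
  · intro y hy
    have hy' : p (h.symm y) ≠ h.symm y := by
      intro hc
      apply hy
      have : permCongrMul h p (h (h.symm y)) = h (p (h.symm y)) := permCongrMul_apply ..
      rw [hc] at this
      simpa using this
    obtain ⟨i, hi⟩ := hsc hy'
    refine ⟨i, ?_⟩
    have : (permCongrMul h p) ^ i = permCongrMul h (p ^ i) := (map_zpow _ _ _).symm
    rw [this]
    have := permCongrMul_apply h (p ^ i) x
    rw [hi] at this
    simpa using this

lemma support_card_permCongrMul {γ δ : Type*} [Fintype γ] [DecidableEq γ] [Fintype δ]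
    [DecidableEq δ] (h : γ ≃ δ) (p : Equiv.Perm γ) :
    (permCongrMul h p).support.card = p.support.card := by
  have : (permCongrMul h p).support = p.support.map h.toEmbedding := by
    ext b
    simp only [Equiv.Perm.mem_support, Finset.mem_map, Equiv.coe_toEmbedding]
    constructor
    · intro hb
      refine ⟨h.symm b, ?_, by simp⟩
      intro hc
      apply hb
      show permCongrMul h p b = b
      have : permCongrMul h p (h (h.symm b)) = h (p (h.symm b)) := permCongrMul_apply ..
      rw [hc] at this
      simpa using this
    · rintro ⟨a, ha, rfl⟩
      rw [permCongrMul_apply]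
      simpa using ha
  rw [this, Finset.card_map]

lemma aux_card {δ : Type*} [Fintype δ] [DecidableEq δ] (f : Equiv.Perm δ) (r : ℕ)
    (hr2 : 2 ≤ r) (hfix : ∀ (z : δ) (k : ℕ), (f ^ k) z = z ↔ r ∣ k) (x : δ) :
    (f.cycleOf x).support.card = r := by
  have hx : f x ≠ x := by
    intro h
    have := (hfix x 1).1 (by simpa using h)
    have := Nat.le_of_dvd one_pos this
    omega
  have hcyc := f.isCycle_cycleOf hx
  rw [← hcyc.orderOf]
  have hfr : f ^ r = 1 := by
    ext z
    simpa using (hfix z r).2 dvd_rfl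
  refine Nat.dvd_antisymm ?_ ?_
  · exact (Equiv.Perm.orderOf_cycleOf_dvd_orderOf f x).trans (orderOf_dvd_of_pow_eq_one hfr)
  · apply (hfix x (orderOf (f.cycleOf x))).1
    have h1 : (f.cycleOf x) ^ orderOf (f.cycleOf x) = 1 := pow_orderOf_eq_one _
    have h2 := f.cycleOf_pow_apply_self x (orderOf (f.cycleOf x))
    rw [h1] at h2
    simpa using h2.symm

end Stmt9Aux


open Stmt9Aux in
/-- Theorem 2.8: if `r ≥ 2` divides `n ≥ 3` and `r ∣ e^(n/r) - 1`, then
for any cyclic `α ∈ Sₙ` of length `n` the equation `(e*α)` has a non-trivial solution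
`y ≠ 1` with `y ^ r = 1` all of whose cycles have length exactly `r`. -/
theorem stmt_9 (n : ℕ) (hn : 3 ≤ n) (e : ℤ) (he : e ∉ ({-1, 0, 1} : Set ℤ))
    (r : ℕ) (hr2 : 2 ≤ r) (hrn : r ∣ n) (hdvd : (r : ℤ) ∣ e ^ (n / r) - 1)
    (α : Equiv.Perm (Fin n)) (hα : α.IsCycle) (hcard : α.support.card = n) :
    ∃ y : Equiv.Perm (Fin n), y ≠ 1 ∧ α * y * α⁻¹ = y ^ e ∧ y ^ r = 1 ∧
      ∀ x : Fin n, (y.cycleOf x).support.card = r := by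
  classical
  haveI : NeZero n := ⟨by omega⟩
  haveI : NeZero r := ⟨by omega⟩
  set m := n / r with hm
  have hmr' : m * r = n := Nat.div_mul_cancel hrn
  have hm1 : 1 ≤ m := by
    rcases Nat.eq_zero_or_pos m with h | h
    · rw [h] at hmr'; omega
    · exact h
  have hE : ((e : ZMod r)) ^ m = 1 := by
    have h := (ZMod.intCast_zmod_eq_zero_iff_dvd (e ^ (n / r) - 1) r).2 hdvd
    push_cast at h
    have h2 : ((e : ZMod r)) ^ (n / r) = 1 := by
      have := sub_eq_zero.1 h
      exact this
    exact h2
  have hu : IsUnit ((e : ZMod r)) := by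
    apply IsUnit.of_mul_eq_one (((e : ZMod r)) ^ (m - 1))
    rw [← pow_succ', Nat.sub_add_cancel hm1, hE]
  set ε := hu.unit with hεdef
  have hεval : (ε : ZMod r) = (e : ZMod r) := hu.unit_spec
  have hεm : ε ^ m = 1 := by
    apply Units.ext
    rw [Units.val_pow_eq_pow_val, hεval, hE, Units.val_one]
  set δ := ε⁻¹ with hδdef
  have hδm : δ ^ m = 1 := by rw [hδdef, inv_pow, hεm, inv_one]
  have hδe : ((δ⁻¹ : (ZMod r)ˣ) : ZMod r) = (e : ZMod r) := by
    rw [hδdef, inv_inv, hεval]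
  set Y := yPerm n r m δ hmr' hδm with hYdef
  have hfixY : ∀ (z : ZMod n) (k : ℕ), ((Y ^ k) z = z ↔ r ∣ k) :=
    fun z k => yPerm_fix n r m δ hmr' hδm hm1 z k
  have hconjY := yPerm_conj n r m (by omega) (by omega) δ hmr' hδm hm1 e hδe
  set c := Equiv.addRight (1 : ZMod n) with hcdef
  have hconjY' : c * Y * c⁻¹ = Y ^ e := by
    rw [mul_inv_eq_iff_eq_mul]; exact hconjY
  have hccyc := addRight_isCycle n (by omega)
  have hccard := addRight_support n (by omega)
  have hcardeq : Fintype.card (ZMod n) = Fintype.card (Fin n) := by simp [ZMod.card]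
  set g : ZMod n ≃ Fin n := Fintype.equivOfCardEq hcardeq with hgdef
  set c' := permCongrMul g c with hc'def
  have hc'cyc : c'.IsCycle := isCycle_permCongrMul g hccyc
  have hc'card : c'.support.card = n := by
    rw [hc'def, support_card_permCongrMul]; exact hccard
  have hconj : IsConj c' α := hc'cyc.isConj hα (by rw [hc'card, hcard])
  obtain ⟨β, hβ⟩ := isConj_iff.1 hconj
  set F := (permCongrMul g).trans (MulAut.conj β) with hFdef
  have hFc : F c = α := by
    show MulAut.conj β (permCongrMul g c) = α
    rw [MulAut.conj_apply]
    exact hβ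
  have hfixF : ∀ (z : Fin n) (k : ℕ), ((F Y ^ k) z = z ↔ r ∣ k) := by
    intro z k
    rw [← map_pow]
    have happ : F (Y ^ k) z = β ((permCongrMul g (Y ^ k)) (β⁻¹ z)) := rfl
    have happ2 : (permCongrMul g (Y ^ k)) (β⁻¹ z) = g ((Y ^ k) (g.symm (β⁻¹ z))) := rfl
    rw [happ, happ2]
    constructor
    · intro h
      have h1 : g ((Y ^ k) (g.symm (β⁻¹ z))) = g (g.symm (β⁻¹ z)) := by
        apply β.injective
        rw [h]
        simp
      exact (hfixY _ k).1 (g.injective h1)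
    · intro h
      rw [(hfixY _ k).2 h]
      simp
  refine ⟨F Y, ?_, ?_, ?_, fun x => aux_card (F Y) r hr2 hfixF x⟩
  · intro h
    have h1 := (hfixF 0 1).1 (by rw [h]; simp)
    have := Nat.le_of_dvd one_pos h1
    omega
  · rw [← hFc, ← map_inv, ← map_mul, ← map_mul, hconjY', map_zpow]
  · rw [← map_pow]
    have hYr : Y ^ r = 1 := by
      ext z
      simpa using (hfixY z r).2 dvd_rfl
    rw [hYr, map_one]
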